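/- For α > -1 and c > 0, the functions Q̃_n^{(α,c)}(x) := (d^n/dx^n)[w_{α+n,c}(x)] satisfy the four-point recurrence x·Q̃_n^{(α,c)}(x) = (1/c²)·Q̃_{n+2}^{(α,c)}(x) − ((c(α+n+1)+2)/c²)·Q̃_{n+1}^{(α,c)}(x) + ((c(α+2n+1)+1)/c²)·Q̃_n^{(α,c)}(x) − (n/c)·Q̃_{n-1}^{(α,c)}(x) for all x > 0 and n ≥ 1. -/

import Mathlib

noncomputable def besselI (ν z : ℝ) : ℝ :=
  (z / 2) ^ ν * ∑' i : ℕ, (z ^ 2 / 4) ^ i / (Real.Gamma (i + 1) * Real.Gamma (ν + i + 1))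

/-- The weight `w_{v,c}(x) = x^{v/2} e^{-c x} I_v(2√x)`. -/
noncomputable def wBessel (v c x : ℝ) : ℝ :=
  x ^ (v / 2) * Real.exp (-c * x) * besselI v (2 * Real.sqrt x)
/-- `Q̃_n^{(α,c)}(x) = (d^n/dx^n) w_{α+n,c}(x)`. -/
noncomputable def Qt (n : ℕ) (α c x : ℝ) : ℝ :=
  iteratedDeriv n (fun y => wBessel (α + n) c y) x


open Filter Topology Set

noncomputable def LWh (v x : ℝ) : ℝ :=
  ∑' i : ℕ, x ^ i / (Real.Gamma (i + 1) * Real.Gamma (v + i + 1))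

lemma gam1_pos (i : ℕ) : 0 < Real.Gamma ((i : ℝ) + 1) :=
  Real.Gamma_pos_of_pos (by positivity)

lemma gam2_pos {v : ℝ} (hv : -1 < v) (i : ℕ) : 0 < Real.Gamma (v + i + 1) :=
  Real.Gamma_pos_of_pos (by have : (0:ℝ) ≤ i := Nat.cast_nonneg i; linarith)

lemma gam1_rec (i : ℕ) : Real.Gamma ((i : ℝ) + 1 + 1) = ((i : ℝ) + 1) * Real.Gamma (i + 1) :=
  Real.Gamma_add_one (by positivity : (0:ℝ) < (i:ℝ) + 1).ne'

lemma gam2_rec {v : ℝ} (hv : -1 < v) (i : ℕ) :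
    Real.Gamma (v + i + 1 + 1) = (v + i + 1) * Real.Gamma (v + i + 1) :=
  Real.Gamma_add_one (by have : (0:ℝ) ≤ i := Nat.cast_nonneg i; linarith :
    (0:ℝ) < v + i + 1).ne'

lemma LWh_summable {v : ℝ} (hv : -1 < v) (x : ℝ) :
    Summable (fun i : ℕ => x ^ i / (Real.Gamma (i + 1) * Real.Gamma (v + i + 1))) := by
  apply summable_of_ratio_norm_eventually_le (r := 1/2) (by norm_num)
  filter_upwards [Filter.eventually_ge_atTop (⌈2 * |x|⌉₊ + 1)] with i hi
  have hic : (2 * |x|) ≤ (i : ℝ) := by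
    calc (2 * |x|) ≤ (⌈2 * |x|⌉₊ : ℝ) := Nat.le_ceil _
    _ ≤ (i : ℝ) := by exact_mod_cast le_trans (Nat.le_succ _) hi
  have hi1 : (1 : ℝ) ≤ (i : ℝ) := by
    have : 1 ≤ i := le_trans (Nat.le_add_left _ _) hi
    exact_mod_cast this
  have h1 := gam1_pos i
  have h2 := gam2_pos hv i
  have key : |x| * 2 ≤ ((i : ℝ) + 1) * (v + (i : ℝ) + 1) := by nlinarith
  have c1 : ((i + 1 : ℕ) : ℝ) + 1 = ((i : ℝ) + 1) + 1 := by push_cast; ring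
  have c2 : v + ((i + 1 : ℕ) : ℝ) + 1 = (v + (i : ℝ) + 1) + 1 := by push_cast; ring
  rw [c1, c2, show ((i:ℝ)+1)+1 = (i:ℝ)+1+1 by ring, gam1_rec i,
    show (v + (i:ℝ) + 1) + 1 = v + (i:ℝ) + 1 + 1 by ring, gam2_rec hv i,
    Real.norm_eq_abs, Real.norm_eq_abs, abs_div, abs_pow, abs_div, abs_pow,
    abs_of_pos (mul_pos (mul_pos (by positivity) h1) (mul_pos (by nlinarith) h2)),
    abs_of_pos (by positivity : (0:ℝ) < Real.Gamma ((i:ℝ)+1) * Real.Gamma (v+(i:ℝ)+1))]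
  have hfac : |x| * 2 / (((i:ℝ)+1)*(v+(i:ℝ)+1)) ≤ 1 := by
    rw [div_le_one (by nlinarith)]; exact key
  calc |x| ^ (i+1) / (((i:ℝ)+1) * Real.Gamma ((i:ℝ)+1) *
      ((v+(i:ℝ)+1) * Real.Gamma (v+(i:ℝ)+1)))
      = (|x| * 2 / (((i:ℝ)+1)*(v+(i:ℝ)+1))) *
        (1/2 * (|x| ^ i / (Real.Gamma ((i:ℝ)+1) * Real.Gamma (v+(i:ℝ)+1)))) := by
        have hA : ((i:ℝ)+1) ≠ 0 := by positivity
        have hB : (v+(i:ℝ)+1) ≠ 0 := by nlinarith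
        rw [pow_succ]; field_simp
    _ ≤ 1 * (1/2 * (|x| ^ i / (Real.Gamma ((i:ℝ)+1) * Real.Gamma (v+(i:ℝ)+1)))) := by
        apply mul_le_mul_of_nonneg_right hfac (by positivity)
    _ = 1/2 * (|x| ^ i / (Real.Gamma ((i:ℝ)+1) * Real.Gamma (v+(i:ℝ)+1))) := by ring

lemma LWh_deriv_summable {v : ℝ} (hv : -1 < v) (R : ℝ) :
    Summable (fun i : ℕ => (i : ℝ) * R ^ (i - 1) / (Real.Gamma (i + 1) * Real.Gamma (v + i + 1))) := by
  apply summable_of_ratio_norm_eventually_le (r := 1/2) (by norm_num)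
  filter_upwards [Filter.eventually_ge_atTop (⌈2 * |R|⌉₊ + 1)] with i hi
  have hic : (2 * |R|) ≤ (i : ℝ) := by
    calc (2 * |R|) ≤ (⌈2 * |R|⌉₊ : ℝ) := Nat.le_ceil _
    _ ≤ (i : ℝ) := by exact_mod_cast le_trans (Nat.le_succ _) hi
  have hi1 : (1 : ℝ) ≤ (i : ℝ) := by
    have : 1 ≤ i := le_trans (Nat.le_add_left _ _) hi
    exact_mod_cast this
  have h1 := gam1_pos i
  have h2 := gam2_pos hv i
  have hii : 1 ≤ i := by exact_mod_cast hi1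
  have hsub : i + 1 - 1 = (i - 1) + 1 := by omega
  have c1 : ((i + 1 : ℕ) : ℝ) + 1 = ((i : ℝ) + 1) + 1 := by push_cast; ring
  have c2 : v + ((i + 1 : ℕ) : ℝ) + 1 = (v + (i : ℝ) + 1) + 1 := by push_cast; ring
  rw [c1, c2, show ((i:ℝ)+1)+1 = (i:ℝ)+1+1 by ring, gam1_rec i,
    show (v + (i:ℝ) + 1) + 1 = v + (i:ℝ) + 1 + 1 by ring, gam2_rec hv i, hsub,
    Real.norm_eq_abs, Real.norm_eq_abs, abs_div, abs_div,
    abs_of_pos (mul_pos (mul_pos (by positivity) h1) (mul_pos (by nlinarith) h2)),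
    abs_of_pos (mul_pos h1 h2), abs_mul, abs_mul, abs_pow, abs_pow]
  have hA : ((i:ℝ)+1) ≠ 0 := by positivity
  have hB : (v+(i:ℝ)+1) ≠ 0 := by nlinarith
  have hcast : |((i+1 : ℕ) : ℝ)| = (i:ℝ) + 1 := by
    rw [abs_of_pos (by exact_mod_cast Nat.succ_pos i)]; push_cast; ring
  rw [hcast, abs_of_nonneg (Nat.cast_nonneg i : (0:ℝ) ≤ i)]
  have hfac : |R| * 2 / ((i:ℝ) * (v+(i:ℝ)+1)) ≤ 1 := by
    rw [div_le_one (by nlinarith)]; nlinarith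
  calc ((i:ℝ)+1) * |R| ^ (i - 1 + 1) / (((i:ℝ)+1) * Real.Gamma ((i:ℝ)+1) *
      ((v+(i:ℝ)+1) * Real.Gamma (v+(i:ℝ)+1)))
      = (|R| * 2 / ((i:ℝ)*(v+(i:ℝ)+1))) *
        (1/2 * ((i:ℝ) * |R| ^ (i-1) / (Real.Gamma ((i:ℝ)+1) * Real.Gamma (v+(i:ℝ)+1)))) := by
        have hi0 : (i:ℝ) ≠ 0 := by positivity
        rw [pow_succ]; field_simp
    _ ≤ 1 * (1/2 * ((i:ℝ) * |R| ^ (i-1) / (Real.Gamma ((i:ℝ)+1) * Real.Gamma (v+(i:ℝ)+1)))) :=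
        mul_le_mul_of_nonneg_right hfac (by positivity)
    _ = 1/2 * ((i:ℝ) * |R| ^ (i-1) / (Real.Gamma ((i:ℝ)+1) * Real.Gamma (v+(i:ℝ)+1))) := by ring

lemma LWh_hasDerivAt {v : ℝ} (hv : -1 < v) (x : ℝ) :
    HasDerivAt (LWh v) (LWh (v + 1) x) x := by
  set R : ℝ := |x| + 1 with hR
  have hxR : x ∈ Metric.ball (0:ℝ) R := by
    simp only [Metric.mem_ball, Real.dist_eq, sub_zero, hR]
    linarith [abs_nonneg x]
  have hg : ∀ (i : ℕ) (y : ℝ), y ∈ Metric.ball (0:ℝ) R →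
      HasDerivAt (fun z : ℝ => z ^ i / (Real.Gamma (i + 1) * Real.Gamma (v + i + 1)))
        ((i : ℝ) * y ^ (i - 1) / (Real.Gamma (i + 1) * Real.Gamma (v + i + 1))) y :=
    fun i y _ => (hasDerivAt_pow i y).div_const _
  have hg' : ∀ (i : ℕ) (y : ℝ), y ∈ Metric.ball (0:ℝ) R →
      ‖(i : ℝ) * y ^ (i - 1) / (Real.Gamma (i + 1) * Real.Gamma (v + i + 1))‖ ≤
        (i : ℝ) * R ^ (i - 1) / (Real.Gamma (i + 1) * Real.Gamma (v + i + 1)) := by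
    intro i y hy
    have hyR : |y| ≤ R := by
      simp only [Metric.mem_ball, Real.dist_eq, sub_zero] at hy
      exact hy.le
    have h1 := gam1_pos i
    have h2 := gam2_pos hv i
    rw [Real.norm_eq_abs, abs_div, abs_mul, abs_pow,
      abs_of_pos (mul_pos h1 h2), Nat.abs_cast]
    refine (div_le_div_iff_of_pos_right (mul_pos h1 h2)).mpr ?_
    exact mul_le_mul_of_nonneg_left (pow_le_pow_left₀ (abs_nonneg y) hyR _) (Nat.cast_nonneg i)
  have hder : HasDerivAt (fun z => ∑' i : ℕ, z ^ i / (Real.Gamma (i + 1) * Real.Gamma (v + i + 1)))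
      (∑' i : ℕ, (i : ℝ) * x ^ (i - 1) / (Real.Gamma (i + 1) * Real.Gamma (v + i + 1))) x :=
    hasDerivAt_tsum_of_isPreconnected (LWh_deriv_summable hv R)
      Metric.isOpen_ball (convex_ball (0:ℝ) R).isPreconnected hg hg' hxR
      (LWh_summable hv x) hxR
  have hsum' : Summable (fun i : ℕ => (i : ℝ) * x ^ (i - 1) /
      (Real.Gamma (i + 1) * Real.Gamma (v + i + 1))) :=
    Summable.of_norm_bounded (LWh_deriv_summable hv R) (fun i => hg' i x hxR)
  have heq : (∑' i : ℕ, (i : ℝ) * x ^ (i - 1) / (Real.Gamma (i + 1) * Real.Gamma (v + i + 1)))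
      = LWh (v + 1) x := by
    rw [Summable.tsum_eq_zero_add hsum']
    simp only [Nat.cast_zero, zero_mul, zero_div, zero_add]
    unfold LWh
    apply tsum_congr
    intro i
    push_cast
    rw [show v + ((i:ℝ) + 1) + 1 = v + 1 + (i:ℝ) + 1 from by ring, gam1_rec i]
    have h2 : 0 < Real.Gamma (v + 1 + (i:ℝ) + 1) := gam2_pos (by linarith) i
    rw [div_eq_div_iff (mul_pos (mul_pos (by positivity : (0:ℝ) < (i:ℝ)+1) (gam1_pos i)) h2).ne'
      (mul_pos (gam1_pos i) h2).ne']
    ring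
  rw [← heq]
  exact hder

lemma LWh_deriv {v : ℝ} (hv : -1 < v) : deriv (LWh v) = LWh (v + 1) :=
  funext fun x => (LWh_hasDerivAt hv x).deriv

lemma LWh_iteratedDeriv {v : ℝ} (hv : -1 < v) (m : ℕ) :
    iteratedDeriv m (LWh v) = LWh (v + m) := by
  induction m generalizing v with
  | zero => simp [iteratedDeriv_zero]
  | succ m ih =>
    rw [iteratedDeriv_succ', LWh_deriv hv, ih (by linarith)]
    norm_num
    ring_nf

lemma LWh_contDiff {v : ℝ} (hv : -1 < v) (m : ℕ) : ContDiff ℝ m (LWh v) := by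
  apply contDiff_of_differentiable_iteratedDeriv
  intro k hk
  rw [LWh_iteratedDeriv hv k]
  exact fun x => (LWh_hasDerivAt (by have : (0:ℝ) ≤ k := Nat.cast_nonneg k; linarith) x).differentiableAt

/-- The key recurrence `h_{v-1}(x) = v h_v(x) + x h_{v+1}(x)` for `v > 0`. -/
lemma LWh_rec {v : ℝ} (hv : 0 < v) (x : ℝ) :
    LWh (v - 1) x = v * LWh v x + x * LWh (v + 1) x := by
  have hv1 : -1 < v - 1 := by linarith
  have hv0 : -1 < v := by linarith
  have hv2 : -1 < v + 1 := by linarith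
  -- LHS split
  have hL : LWh (v - 1) x = 1 / (Real.Gamma 1 * Real.Gamma v) +
      ∑' i : ℕ, x ^ (i+1) / (Real.Gamma ((i:ℝ) + 1 + 1) * Real.Gamma (v + i + 1)) := by
    unfold LWh
    rw [Summable.tsum_eq_zero_add (LWh_summable hv1 x)]
    congr 1
    · norm_num
    · apply tsum_congr
      intro i
      push_cast
      rw [show v - 1 + ((i:ℝ) + 1) + 1 = v + i + 1 from by ring]
  -- v * h v split
  have hM : v * LWh v x = v * (1 / (Real.Gamma 1 * Real.Gamma (v + 1))) +
      ∑' i : ℕ, v * (x ^ (i+1) / (Real.Gamma ((i:ℝ) + 1 + 1) * Real.Gamma (v + i + 1 + 1))) := by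
    unfold LWh
    rw [Summable.tsum_eq_zero_add (LWh_summable hv0 x), mul_add, ← tsum_mul_left]
    congr 1
    · norm_num
    · apply tsum_congr
      intro i
      push_cast
      rw [show v + ((i:ℝ) + 1) + 1 = v + i + 1 + 1 from by ring]
  have hsv : Summable (fun i : ℕ =>
      v * (x ^ (i+1) / (Real.Gamma ((i:ℝ) + 1 + 1) * Real.Gamma (v + i + 1 + 1)))) := by
    apply Summable.mul_left
    have := (LWh_summable hv0 x).comp_injective (add_left_injective 1)
    apply this.congr
    intro i
    simp only [Function.comp_apply]
    push_cast
    rw [show v + ((i:ℝ) + 1) + 1 = v + i + 1 + 1 from by ring]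
  have hsx : Summable (fun i : ℕ =>
      x * (x ^ i / (Real.Gamma ((i:ℝ) + 1) * Real.Gamma (v + i + 1 + 1)))) := by
    apply Summable.mul_left
    apply (LWh_summable hv2 x).congr
    intro i
    rw [show v + 1 + (i:ℝ) + 1 = v + i + 1 + 1 from by ring]
  have hX : x * LWh (v + 1) x =
      ∑' i : ℕ, x * (x ^ i / (Real.Gamma ((i:ℝ) + 1) * Real.Gamma (v + i + 1 + 1))) := by
    unfold LWh
    rw [← tsum_mul_left]
    apply tsum_congr
    intro i
    rw [show v + 1 + (i:ℝ) + 1 = v + i + 1 + 1 from by ring]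
  rw [hL, hM, hX, add_assoc, ← Summable.tsum_add hsv hsx]
  congr 1
  · rw [Real.Gamma_add_one hv.ne']
    field_simp
  · apply tsum_congr
    intro i
    have h1 := gam1_pos i
    have h2 := gam2_pos hv0 i
    have h3 : (0:ℝ) < v + i + 1 := by have : (0:ℝ) ≤ i := Nat.cast_nonneg i; linarith
    rw [gam2_rec hv0 i, gam1_rec i, pow_succ]
    field_simp
    ring

noncomputable def gw (v c : ℝ) : ℝ → ℝ := fun x => x ^ v * (Real.exp (-c * x) * LWh v x)

lemma wBessel_eq_gw {v c x : ℝ} (hx : 0 < x) : wBessel v c x = gw v c x := by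
  unfold wBessel gw besselI
  have h1 : (2 * Real.sqrt x / 2) = Real.sqrt x := by ring
  have h2 : ((2 * Real.sqrt x) ^ 2 / 4) = x := by
    rw [mul_pow, Real.sq_sqrt hx.le]; ring
  rw [h1, h2, Real.sqrt_eq_rpow, ← Real.rpow_mul hx.le, show (1/(2:ℝ)) * v = v/2 from by ring]
  have h3 : x ^ (v/2) * x ^ (v/2) = x ^ v := by
    rw [← Real.rpow_add hx]; norm_num
  calc x ^ (v/2) * Real.exp (-c * x) *
      (x ^ (v/2) * ∑' (i : ℕ), x ^ i / (Real.Gamma (↑i + 1) * Real.Gamma (v + ↑i + 1)))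
      = (x ^ (v/2) * x ^ (v/2)) * (Real.exp (-c*x) *
        ∑' (i : ℕ), x ^ i / (Real.Gamma (↑i + 1) * Real.Gamma (v + ↑i + 1))) := by ring
    _ = x ^ v * (Real.exp (-c * x) * LWh v x) := by rw [h3]; rfl

lemma gw_contDiffOn {v c : ℝ} (hv : -1 < v) (m : ℕ) :
    ContDiffOn ℝ m (gw v c) (Set.Ioi 0) := by
  apply ContDiffOn.mul
  · intro x hx
    exact (Real.contDiffAt_rpow_const_of_ne (ne_of_gt (mem_Ioi.mp hx))).contDiffWithinAt
  · apply ContDiffOn.mul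
    · apply ContDiff.contDiffOn
      exact (Real.contDiff_exp.comp ((contDiff_const).mul contDiff_id)).of_le le_top
    · exact (LWh_contDiff hv m).contDiffOn

lemma gw_hasDerivAt {v c x : ℝ} (hv : 0 < v) (hx : 0 < x) :
    HasDerivAt (gw v c) (gw (v-1) c x - c * gw v c x) x := by
  have hv' : -1 < v := by linarith
  have hA : HasDerivAt (fun y : ℝ => y ^ v) (v * x ^ (v-1)) x :=
    Real.hasDerivAt_rpow_const (Or.inl hx.ne')
  have hB : HasDerivAt (fun y : ℝ => Real.exp (-c * y)) (Real.exp (-c * x) * (-c)) x := by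
    have : HasDerivAt (fun y : ℝ => -c * y) (-c) x := by
      simpa using (hasDerivAt_id x).const_mul (-c)
    exact this.exp
  have hC : HasDerivAt (LWh v) (LWh (v + 1) x) x := LWh_hasDerivAt hv' x
  have := hA.mul ((hB.mul hC))
  refine this.congr_deriv ?_; symm; simp only [Pi.mul_apply]
  have hxv : x ^ (v-1) * x = x ^ v := by
    rw [← Real.rpow_add_one hx.ne']
    norm_num
  unfold gw
  rw [LWh_rec hv x]
  set E := Real.exp (-c * x)
  set H0 := LWh v x
  set H1 := LWh (v + 1) x
  linear_combination (E * H1) * hxv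

lemma evIoi {f g : ℝ → ℝ} {x : ℝ} (hx : 0 < x) (h : ∀ y ∈ Ioi (0:ℝ), f y = g y) :
    f =ᶠ[𝓝 x] g := by
  filter_upwards [isOpen_Ioi.mem_nhds hx] with y hy using h y hy

lemma diff_aux {f : ℝ → ℝ} {k m : ℕ} (hf : ContDiffOn ℝ m f (Set.Ioi 0)) (hk : k < m)
    {x : ℝ} (hx : 0 < x) : DifferentiableAt ℝ (iteratedDeriv k f) x := by
  have hu : UniqueDiffOn ℝ (Set.Ioi (0:ℝ)) := isOpen_Ioi.uniqueDiffOn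
  have h1 : iteratedDerivWithin k f (Set.Ioi 0) =ᶠ[𝓝 x] iteratedDeriv k f := by
    filter_upwards [isOpen_Ioi.mem_nhds hx] with y hy
    rw [iteratedDerivWithin_eq_iteratedFDerivWithin,
      iteratedFDerivWithin_of_isOpen k isOpen_Ioi hy, iteratedDeriv_eq_iteratedFDeriv]
  have h2 : DifferentiableWithinAt ℝ (iteratedDerivWithin k f (Set.Ioi 0)) (Set.Ioi 0) x :=
    hf.differentiableOn_iteratedDerivWithin (by exact_mod_cast hk) hu x hx
  exact h1.differentiableAt_iff.mp (h2.differentiableAt (isOpen_Ioi.mem_nhds hx))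

/-- Key recurrence on iterated derivatives:
`D^k g_{v-1} = D^{k+1} g_v + c D^k g_v` on `(0,∞)`, for `v > 0`. -/
lemma key1 {v c : ℝ} (hv : 0 < v) (k : ℕ) {x : ℝ} (hx : 0 < x) :
    iteratedDeriv k (gw (v-1) c) x =
      iteratedDeriv (k+1) (gw v c) x + c * iteratedDeriv k (gw v c) x := by
  have hv' : -1 < v := by linarith
  induction k generalizing x with
  | zero =>
    simp only [zero_add, iteratedDeriv_one, iteratedDeriv_zero]
    rw [(gw_hasDerivAt hv hx (c := c)).deriv]
    ring
  | succ k ih =>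
    rw [iteratedDeriv_succ]
    have hev : iteratedDeriv k (gw (v-1) c) =ᶠ[𝓝 x]
        (fun y => iteratedDeriv (k+1) (gw v c) y + c * iteratedDeriv k (gw v c) y) :=
      evIoi hx (fun y hy => ih hy)
    rw [hev.deriv_eq]
    have d1 : DifferentiableAt ℝ (iteratedDeriv (k+1) (gw v c)) x :=
      diff_aux (gw_contDiffOn hv' (k+2)) (by omega) hx
    have d2 : DifferentiableAt ℝ (iteratedDeriv k (gw v c)) x :=
      diff_aux (gw_contDiffOn hv' (k+1)) (by omega) hx
    rw [deriv_fun_add d1 (d2.const_mul c), deriv_const_mul c d2,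
      ← iteratedDeriv_succ, ← iteratedDeriv_succ]

/-- Linearity of iterated derivatives on `(0,∞)` for functions smooth there. -/
lemma key0 {F G : ℝ → ℝ} (hF : ∀ m : ℕ, ContDiffOn ℝ m F (Set.Ioi 0))
    (hG : ∀ m : ℕ, ContDiffOn ℝ m G (Set.Ioi 0)) (a b : ℝ) (k : ℕ) {x : ℝ} (hx : 0 < x) :
    iteratedDeriv k (fun y => a * F y + b * G y) x =
      a * iteratedDeriv k F x + b * iteratedDeriv k G x := by
  induction k generalizing x with
  | zero => simp
  | succ k ih =>
    rw [iteratedDeriv_succ]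
    have hev : iteratedDeriv k (fun y => a * F y + b * G y) =ᶠ[𝓝 x]
        (fun y => a * iteratedDeriv k F y + b * iteratedDeriv k G y) :=
      evIoi hx (fun y hy => ih hy)
    rw [hev.deriv_eq]
    have d1 : DifferentiableAt ℝ (iteratedDeriv k F) x := diff_aux (hF (k+1)) (by omega) hx
    have d2 : DifferentiableAt ℝ (iteratedDeriv k G) x := diff_aux (hG (k+1)) (by omega) hx
    rw [deriv_fun_add (d1.const_mul a) (d2.const_mul b), deriv_const_mul a d1,
      deriv_const_mul b d2, ← iteratedDeriv_succ, ← iteratedDeriv_succ]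

/-- Leibniz rule for multiplication by `x`, on `(0,∞)`. -/
lemma key2 {F : ℝ → ℝ} (hF : ∀ m : ℕ, ContDiffOn ℝ m F (Set.Ioi 0)) (k : ℕ) {x : ℝ}
    (hx : 0 < x) :
    iteratedDeriv k (fun y => y * F y) x =
      x * iteratedDeriv k F x + k * iteratedDeriv (k-1) F x := by
  induction k generalizing x with
  | zero => simp
  | succ k ih =>
    rw [iteratedDeriv_succ]
    have hev : iteratedDeriv k (fun y => y * F y) =ᶠ[𝓝 x]
        (fun y => y * iteratedDeriv k F y + k * iteratedDeriv (k-1) F y) :=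
      evIoi hx (fun y hy => ih hy)
    rw [hev.deriv_eq]
    have d1 : DifferentiableAt ℝ (iteratedDeriv k F) x := diff_aux (hF (k+1)) (by omega) hx
    rcases Nat.eq_zero_or_pos k with rfl | hkpos
    · simp only [Nat.zero_sub, iteratedDeriv_zero, Nat.cast_zero, zero_mul, add_zero,
        CharP.cast_eq_zero]
      simp only [iteratedDeriv_zero] at d1
      rw [deriv_fun_mul differentiableAt_fun_id d1, deriv_id'']
      simp only [zero_add, iteratedDeriv_one, Nat.cast_one, iteratedDeriv_zero,
        Nat.sub_self]
      ring
    · have d2 : DifferentiableAt ℝ (iteratedDeriv (k-1) F) x :=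
        diff_aux (hF k) (Nat.sub_lt hkpos one_pos) hx
      rw [deriv_fun_add (show DifferentiableAt ℝ (fun y => y * iteratedDeriv k F y) x from differentiableAt_fun_id.mul d1) (d2.const_mul _),
        deriv_fun_mul differentiableAt_fun_id d1, deriv_const_mul _ d2, deriv_id'',
        ← iteratedDeriv_succ, ← iteratedDeriv_succ,
        show k - 1 + 1 = k from Nat.succ_pred_eq_of_pos hkpos,
        show k + 1 - 1 = k from rfl]
      push_cast
      ring

lemma F2 {v c : ℝ} (hv : -1 < v) {y : ℝ} (hy : 0 < y) :
    y * gw v c y = (v + 1) * gw (v+1) c y + gw (v+2) c y := by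
  have h := LWh_rec (show 0 < v + 1 by linarith) y
  rw [show v + 1 - 1 = v from by ring, show v + 1 + 1 = v + 2 from by ring] at h
  have e1 : y ^ (v+1) = y ^ v * y := Real.rpow_add_one hy.ne' v
  have e2 : y ^ (v+2) = y ^ (v+1) * y := by
    rw [← Real.rpow_add_one hy.ne']; ring_nf
  unfold gw
  rw [e2, e1, h]
  ring

theorem Qt_four_point_recurrence (n : ℕ) (hn : 1 ≤ n) (α c x : ℝ) (hα : -1 < α) (hc : 0 < c)
    (hx : 0 < x) :
    x * Qt n α c x =
      (1 / c ^ 2) * Qt (n + 2) α c x - ((c * (α + n + 1) + 2) / c ^ 2) * Qt (n + 1) α c x +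
        ((c * (α + 2 * n + 1) + 1) / c ^ 2) * Qt n α c x - ((n : ℝ) / c) * Qt (n - 1) α c x := by
  have hn1 : (1:ℝ) ≤ (n:ℝ) := by exact_mod_cast hn
  have hv0 : 0 < α + (n:ℝ) := by linarith
  have hv1 : -1 < α + (n:ℝ) := by linarith
  -- rewrite the Qt's in terms of gw
  have hQ : ∀ k : ℕ, Qt k α c x = iteratedDeriv k (gw (α + k) c) x := by
    intro k
    unfold Qt
    exact (evIoi hx (fun y hy => wBessel_eq_gw hy)).iteratedDeriv_eq k
  have c1 : (((n+1:ℕ)):ℝ) = (n:ℝ) + 1 := by push_cast; ring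
  have c2 : (((n+2:ℕ)):ℝ) = (n:ℝ) + 2 := by push_cast; ring
  have c3 : (((n-1:ℕ)):ℝ) = (n:ℝ) - 1 := by
    rw [Nat.cast_sub hn, Nat.cast_one]
  have hq0 : Qt n α c x = iteratedDeriv n (gw (α + n) c) x := hQ n
  have hq1 : Qt (n+1) α c x = iteratedDeriv (n+1) (gw (α + n + 1) c) x := by
    rw [hQ (n+1), c1, show α + ((n:ℝ)+1) = α + n + 1 from by ring]
  have hq2 : Qt (n+2) α c x = iteratedDeriv (n+2) (gw (α + n + 2) c) x := by
    rw [hQ (n+2), c2, show α + ((n:ℝ)+2) = α + n + 2 from by ring]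
  have hqm : Qt (n-1) α c x = iteratedDeriv (n-1) (gw (α + n - 1) c) x := by
    rw [hQ (n-1), c3, show α + ((n:ℝ)-1) = α + n - 1 from by ring]
  -- the five equations
  have E1 := key1 (c := c) (show 0 < α + (n:ℝ) + 1 by linarith) n hx
  rw [show α + (n:ℝ) + 1 - 1 = α + n from by ring] at E1
  have E2 := key1 (c := c) (show 0 < α + (n:ℝ) + 2 by linarith) n hx
  rw [show α + (n:ℝ) + 2 - 1 = α + n + 1 from by ring] at E2
  have E3 := key1 (c := c) (show 0 < α + (n:ℝ) + 2 by linarith) (n+1) hx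
  rw [show α + (n:ℝ) + 2 - 1 = α + n + 1 from by ring] at E3
  have E4 := key1 (c := c) hv0 (n-1) hx
  rw [show n - 1 + 1 = n from Nat.succ_pred_eq_of_pos hn] at E4
  have hsm : ∀ m : ℕ, ContDiffOn ℝ m (gw (α + n) c) (Set.Ioi 0) :=
    fun m => gw_contDiffOn hv1 m
  have E5 := key2 hsm n hx
  have E6 : iteratedDeriv n (fun y => y * gw (α + n) c y) x =
      (α + n + 1) * iteratedDeriv n (gw (α + n + 1) c) x +
        1 * iteratedDeriv n (gw (α + n + 2) c) x := by
    rw [(evIoi hx (fun y hy => ?_)).iteratedDeriv_eq n]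
    · exact key0 (fun m => gw_contDiffOn (by linarith) m)
        (fun m => gw_contDiffOn (by linarith) m) _ _ n hx
    · rw [one_mul]
      exact F2 hv1 hy
  rw [hq0, hq1, hq2, hqm]
  set Q0 := iteratedDeriv n (gw (α + n) c) x
  set Q1 := iteratedDeriv (n+1) (gw (α + n + 1) c) x
  set Q2 := iteratedDeriv (n+2) (gw (α + n + 2) c) x
  set Qm := iteratedDeriv (n-1) (gw (α + n - 1) c) x
  set B1 := iteratedDeriv n (gw (α + n + 1) c) x
  set B2 := iteratedDeriv n (gw (α + n + 2) c) x
  set C2 := iteratedDeriv (n+1) (gw (α + n + 2) c) x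
  set Dm := iteratedDeriv (n-1) (gw (α + n) c) x
  have hc0 : c ≠ 0 := hc.ne'
  -- E1 : Q0 = Q1 + c*B1 ; E2 : B1 = C2 + c*B2 ; E3 : Q1 = Q2 + c*C2 ; E4 : Qm = Q0 + c*Dm
  -- E5/E6 : x*Q0 + n*Dm = (α+n+1)*B1 + B2
  have hxQ : x * Q0 = (α + n + 1) * B1 + B2 - n * Dm := by
    rw [E6] at E5; linarith
  have goal' : c^2 * ((α + (n:ℝ) + 1) * B1 + B2 - (n:ℝ) * Dm) =
      Q2 - (c * (α + (n:ℝ) + 1) + 2) * Q1 + (c * (α + 2*(n:ℝ) + 1) + 1) * Q0 - c * (n:ℝ) * Qm := by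
    linear_combination (-(c * (α + (n:ℝ) + 1) + 1)) * E1 - c * E2 + E3 + c * (n:ℝ) * E4
  rw [hxQ]
  field_simp
  linear_combination goal'
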